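/- arXiv:2210.09392 — 6 statements merged into one kernel-verified Lean document; each statement's English description precedes it below -/
import Mathlib

section
/- Let m ≥ 1, let 𝒞 ⊆ ℝ^m be a compact set, and let f : ℝ^m → ℝ be continuous on 𝒞. Then for every ε > 0 there exist N ∈ ℕ and vectors u_{i,j} ∈ ℝ^{m+1} for 1 ≤ i ≤ N, 1 ≤ j ≤ i, such that the function p(x) = Σ_{i=1}^N ∏_{j=1}^i ⟨x̌, u_{i,j}⟩ satisfies |f(x) − p(x)| < ε for every x ∈ 𝒞, where x̌ = (x_1, …, x_m, 1) ∈ ℝ^{m+1} and ⟨·,·⟩ is the standard Euclidean inner product on ℝ^{m+1}. -/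
namespace ApproxAff

noncomputable def inn (m : ℕ) (x : Fin m → ℝ) (v : Fin (m+1) → ℝ) : ℝ :=
  ∑ t : Fin (m+1), (Fin.snoc x 1 : Fin (m+1) → ℝ) t * v t

def Q (m : ℕ) (p : (Fin m → ℝ) → ℝ) : Prop :=
  ∃ (N : ℕ) (u : ℕ → ℕ → (Fin (m+1) → ℝ)),
    ∀ x, p x = ∑ i ∈ Finset.range N, ∏ j ∈ Finset.range (i+1), inn m x (u i j)

variable {m : ℕ}

lemma inn_zero (x : Fin m → ℝ) : inn m x 0 = 0 := by simp [inn]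

lemma inn_single (x : Fin m → ℝ) (i : Fin (m+1)) (c : ℝ) :
    inn m x (Pi.single i c) = (Fin.snoc x 1 : Fin (m+1) → ℝ) i * c := by
  simp [inn, Pi.single_apply, mul_ite]

noncomputable def onev (m : ℕ) : Fin (m+1) → ℝ := Pi.single (Fin.last m) 1

lemma inn_onev (x : Fin m → ℝ) : inn m x (onev m) = 1 := by
  simp [onev, inn_single]

lemma Q_zero : Q m (fun _ => 0) := ⟨0, 0, by simp⟩

lemma Q_add {p q : (Fin m → ℝ) → ℝ} (hp : Q m p) (hq : Q m q) :
    Q m (fun x => p x + q x) := by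
  obtain ⟨N₁, u₁, h₁⟩ := hp
  obtain ⟨N₂, u₂, h₂⟩ := hq
  refine ⟨N₁ + N₂, fun i j => if i < N₁ then u₁ i j else
    (if j ≤ i - N₁ then u₂ (i - N₁) j else onev m), fun x => ?_⟩
  show p x + q x = _
  rw [h₁ x, h₂ x, Finset.sum_range_add]
  congr 1
  · exact Finset.sum_congr rfl fun i hi => by
      rw [Finset.mem_range] at hi
      exact Finset.prod_congr rfl fun j _ => by simp [hi]
  · refine Finset.sum_congr rfl fun i _ => ?_
    have hb : N₁ + i + 1 = (i + 1) + N₁ := by omega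
    rw [hb, Finset.prod_range_add (fun j => inn m x
      (if N₁ + i < N₁ then u₁ (N₁+i) j else
        (if j ≤ (N₁+i) - N₁ then u₂ ((N₁+i) - N₁) j else onev m))) (i+1) N₁]
    have h1 : ∀ j ∈ Finset.range (i+1),
        inn m x (if N₁ + i < N₁ then u₁ (N₁+i) j else
          (if j ≤ (N₁+i) - N₁ then u₂ ((N₁+i) - N₁) j else onev m)) = inn m x (u₂ i j) := by
      intro j hj
      rw [Finset.mem_range] at hj
      have hlt : ¬ (N₁ + i < N₁) := by omega
      simp only [hlt, if_false, Nat.add_sub_cancel_left]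
      rw [if_pos (by omega)]
    have h2 : (∏ j ∈ Finset.range N₁, inn m x
        (if N₁ + i < N₁ then u₁ (N₁+i) (i+1+j) else
          (if i+1+j ≤ (N₁+i) - N₁ then u₂ ((N₁+i) - N₁) (i+1+j) else onev m))) = 1 := by
      refine Finset.prod_eq_one fun j _ => ?_
      have hlt : ¬ (N₁ + i < N₁) := by omega
      have hle : ¬ (i+1+j ≤ (N₁+i) - N₁) := by omega
      simp only [hlt, if_false, hle, inn_onev]
    rw [Finset.prod_congr rfl h1, h2, mul_one]

lemma Q_prodlen (k : ℕ) (v : ℕ → Fin (m+1) → ℝ) :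
    Q m (fun x => ∏ j ∈ Finset.range (k+1), inn m x (v j)) := by
  refine ⟨k+1, fun i j => if i = k then v j else 0, fun x => ?_⟩
  show (∏ j ∈ Finset.range (k+1), inn m x (v j)) = _
  rw [Finset.sum_range_succ]
  have h0 : (∑ i ∈ Finset.range k, ∏ j ∈ Finset.range (i+1),
      inn m x (if i = k then v j else 0)) = 0 := by
    refine Finset.sum_eq_zero fun i hi => ?_
    rw [Finset.mem_range] at hi
    refine Finset.prod_eq_zero (Finset.self_mem_range_succ i) ?_
    rw [if_neg (by omega), inn_zero]
  rw [h0, zero_add]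
  exact Finset.prod_congr rfl fun j _ => by simp

lemma Q_sum {ι : Type*} (s : Finset ι) (g : ι → (Fin m → ℝ) → ℝ)
    (h : ∀ i ∈ s, Q m (g i)) : Q m (fun x => ∑ i ∈ s, g i x) := by
  induction s using Finset.cons_induction with
  | empty => simpa using Q_zero
  | cons a s ha ih =>
    simp only [Finset.sum_cons]
    exact Q_add (h a (Finset.mem_cons_self a s))
      (ih fun i hi => h i (Finset.mem_cons_of_mem hi))

lemma Q_mul {p q : (Fin m → ℝ) → ℝ} (hp : Q m p) (hq : Q m q) :
    Q m (fun x => p x * q x) := by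
  obtain ⟨N₁, u₁, h₁⟩ := hp
  obtain ⟨N₂, u₂, h₂⟩ := hq
  have : Q m (fun x => ∑ i ∈ Finset.range N₁, ∑ i' ∈ Finset.range N₂,
      ((∏ j ∈ Finset.range (i+1), inn m x (u₁ i j)) *
       (∏ j ∈ Finset.range (i'+1), inn m x (u₂ i' j)))) := by
    refine Q_sum _ _ fun i _ => Q_sum _ _ fun i' _ => ?_
    have key : ∀ x : Fin m → ℝ,
        (∏ j ∈ Finset.range (i+1), inn m x (u₁ i j)) *
          (∏ j ∈ Finset.range (i'+1), inn m x (u₂ i' j)) =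
        ∏ j ∈ Finset.range ((i + i' + 1) + 1),
          inn m x (if j < i + 1 then u₁ i j else u₂ i' (j - (i+1))) := by
      intro x
      have hsplit : (i + i' + 1) + 1 = (i+1) + (i'+1) := by omega
      have e1 : (∏ j ∈ Finset.range (i+1),
          inn m x (if j < i + 1 then u₁ i j else u₂ i' (j - (i+1)))) =
          ∏ j ∈ Finset.range (i+1), inn m x (u₁ i j) :=
        Finset.prod_congr rfl fun j hj => by
          rw [Finset.mem_range] at hj; rw [if_pos hj]
      have e2 : (∏ j ∈ Finset.range (i'+1),
          inn m x (if (i+1)+j < i + 1 then u₁ i ((i+1)+j) else u₂ i' (((i+1)+j) - (i+1)))) =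
          ∏ j ∈ Finset.range (i'+1), inn m x (u₂ i' j) :=
        Finset.prod_congr rfl fun j _ => by
          have hneg : ¬ ((i+1)+j < i+1) := by omega
          have harg : (i+1)+j - (i+1) = j := by omega
          rw [if_neg hneg, harg]
      rw [hsplit, Finset.prod_range_add (fun j => inn m x
        (if j < i + 1 then u₁ i j else u₂ i' (j - (i+1)))) (i+1) (i'+1), e1, e2]
    simp only [key]
    exact Q_prodlen _ _
  obtain ⟨N, u, h⟩ := this
  refine ⟨N, u, fun x => ?_⟩
  show p x * q x = _
  rw [h₁ x, h₂ x, Finset.sum_mul_sum, ← h x]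

lemma Q_const (r : ℝ) : Q m (fun _ => r) := by
  have := Q_prodlen (m := m) 0 (fun _ => Pi.single (Fin.last m) r)
  simpa [inn_single] using this

lemma Q_coord (s : Fin m) : Q m (fun x => x s) := by
  have := Q_prodlen (m := m) 0 (fun _ => Pi.single (Fin.castSucc s) (1:ℝ))
  simpa [inn_single] using this

end ApproxAff


open ApproxAff in
/-- **Approximation of continuous functions on a compact set by sums of products of
affine linear forms.**

For `x : Fin m → ℝ`, write `x̌ = Fin.snoc x 1 : Fin (m+1) → ℝ` for the vector obtained by
appending the entry `1`, and `⟨y, u⟩ = ∑ t, y t * u t` for the standard Euclidean inner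
product on `ℝ^(m+1)`.  Given a compact set `𝒞 ⊆ ℝ^m`, a function `f` continuous on `𝒞`,
and `ε > 0`, there are `N ∈ ℕ` and vectors `u i j ∈ ℝ^(m+1)` (for `i < N`, `j ≤ i`) such
that `p x = ∑_{i<N} ∏_{j≤i} ⟨x̌, u i j⟩` satisfies `|f x − p x| < ε` on `𝒞`. -/
theorem approx_by_products_of_affine_forms
    (m : ℕ) (hm : 1 ≤ m) (C : Set (Fin m → ℝ)) (hC : IsCompact C)
    (f : (Fin m → ℝ) → ℝ) (hf : ContinuousOn f C)
    (ε : ℝ) (hε : 0 < ε) :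
    ∃ (N : ℕ) (u : ℕ → ℕ → (Fin (m + 1) → ℝ)),
      ∀ x ∈ C,
        |f x - ∑ i ∈ Finset.range N, ∏ j ∈ Finset.range (i + 1),
            (∑ t : Fin (m + 1), (Fin.snoc x 1 : Fin (m + 1) → ℝ) t * u i j t)| < ε := by
  haveI : CompactSpace C := isCompact_iff_compactSpace.mp hC
  set coord : Fin m → C(C, ℝ) := fun s =>
    ⟨fun x => (x : Fin m → ℝ) s, (continuous_apply s).comp continuous_subtype_val⟩ with hcoord
  set B : Subalgebra ℝ C(C, ℝ) := Algebra.adjoin ℝ (Set.range coord) with hB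
  have hsep : B.SeparatesPoints := by
    intro x y hxy
    have : (x : Fin m → ℝ) ≠ (y : Fin m → ℝ) := fun h => hxy (Subtype.ext h)
    obtain ⟨s, hs⟩ := Function.ne_iff.mp this
    exact ⟨_, ⟨coord s, Algebra.subset_adjoin ⟨s, rfl⟩, rfl⟩, hs⟩
  have hfr : Continuous (C.restrict f) := hf.restrict
  obtain ⟨⟨g, hgB⟩, hg⟩ :=
    ContinuousMap.exists_mem_subalgebra_near_continuous_of_separatesPoints B hsep
      (C.restrict f) hfr ε hε
  -- every element of B agrees on C with a function satisfying Q
  have key : ∀ g ∈ B, ∃ p, Q m p ∧ ∀ x : C, g x = p (x : Fin m → ℝ) := by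
    intro g hg
    induction hg using Algebra.adjoin_induction with
    | mem g hgmem =>
      obtain ⟨s, rfl⟩ := hgmem
      exact ⟨fun x => x s, Q_coord s, fun x => rfl⟩
    | algebraMap r => exact ⟨fun _ => r, Q_const r, fun x => rfl⟩
    | add g₁ g₂ h₁ h₂ ih₁ ih₂ =>
      obtain ⟨p₁, hp₁, e₁⟩ := ih₁
      obtain ⟨p₂, hp₂, e₂⟩ := ih₂
      exact ⟨fun x => p₁ x + p₂ x, Q_add hp₁ hp₂, fun x => by
        simp [e₁ x, e₂ x]⟩
    | mul g₁ g₂ h₁ h₂ ih₁ ih₂ =>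
      obtain ⟨p₁, hp₁, e₁⟩ := ih₁
      obtain ⟨p₂, hp₂, e₂⟩ := ih₂
      exact ⟨fun x => p₁ x * p₂ x, Q_mul hp₁ hp₂, fun x => by
        simp [e₁ x, e₂ x]⟩
  obtain ⟨p, ⟨N, u, hNu⟩, hpe⟩ := key g hgB
  refine ⟨N, u, fun x hx => ?_⟩
  have h1 := hg ⟨x, hx⟩
  have h2 := hpe ⟨x, hx⟩
  have h3 := hNu x
  change ‖g ⟨x, hx⟩ - f x‖ < ε at h1
  have : |f x - p x| < ε := by
    rw [abs_sub_comm]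
    simpa [h2] using h1
  simp only [inn] at h3
  rw [← h3]
  exact this
end

section
/- Let m, k ≥ 1 and let p : ℝ^m → ℝ be a polynomial of total degree at most k. Then there exist real coefficients c_{i,d} and vectors v_{i,d} ∈ ℝ^m, for 0 ≤ i ≤ k and 1 ≤ d ≤ n_i with n_i = binomial(m + i − 1, i), such that p(x) = Σ_{i=0}^k Σ_{d=1}^{n_i} c_{i,d} ⟨x, v_{i,d}⟩^i for all x ∈ ℝ^m, where ⟨·,·⟩ is the standard Euclidean inner product on ℝ^m. -/
open MvPolynomial Finset Submodule

namespace ChuiLiAux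

variable {m : ℕ}

/-- The set of `i`-th powers of linear forms. -/
def powSet (m i : ℕ) : Set (MvPolynomial (Fin m) ℝ) :=
  Set.range fun a : Fin m → ℝ => (∑ t, C (a t) * X t) ^ i

lemma prod_X_pow_eq (β : Fin m → ℕ) :
    (∏ t, X t ^ β t : MvPolynomial (Fin m) ℝ)
      = monomial (Finsupp.equivFunOnFinite.symm β) 1 := by
  rw [← MvPolynomial.prod_X_pow_eq_monomial]
  refine (Finset.prod_subset (Finset.subset_univ _) fun x _ hx => ?_).symm
  have : (Finsupp.equivFunOnFinite.symm β) x = 0 := Finsupp.notMem_support_iff.mp hx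
  simp only [Finsupp.coe_equivFunOnFinite_symm] at this
  simp [this]

lemma pow_linear_expand (a : Fin m → ℝ) (i : ℕ) :
    ((∑ t, C (a t) * X t) ^ i : MvPolynomial (Fin m) ℝ)
      = ∑ β ∈ piAntidiag (univ : Finset (Fin m)) i,
          C ((Nat.multinomial univ β : ℝ) * ∏ t, a t ^ β t) * ∏ t, X t ^ β t := by
  rw [Finset.sum_pow_eq_sum_piAntidiag]
  refine Finset.sum_congr rfl fun β _ => ?_
  have h1 : ((Nat.multinomial univ β : ℕ) : MvPolynomial (Fin m) ℝ)
      = C ((Nat.multinomial univ β : ℝ)) := (MvPolynomial.C_eq_coe_nat _).symm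
  rw [h1]
  have h2 : ∀ t : Fin m, (C (a t) * X t) ^ β t
      = C (a t ^ β t) * (X t : MvPolynomial (Fin m) ℝ) ^ β t := by
    intro t; rw [mul_pow, map_pow]
  rw [Finset.prod_congr rfl fun t _ => h2 t, Finset.prod_mul_distrib,
    ← map_prod, map_mul, mul_assoc]

lemma monomial_mem_span (i : ℕ) (α : Fin m → ℕ)
    (hα : α ∈ piAntidiag (univ : Finset (Fin m)) i) :
    (∏ t, X t ^ α t : MvPolynomial (Fin m) ℝ) ∈ span ℝ (powSet m i) := by
  by_contra hmem
  obtain ⟨f, hfα, hbot⟩ :=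
    Submodule.exists_dual_map_eq_bot_of_notMem hmem inferInstance
  have hf0 : ∀ a : Fin m → ℝ, f ((∑ t, C (a t) * X t) ^ i) = 0 := by
    intro a
    have hmm : f ((∑ t, C (a t) * X t) ^ i) ∈ (span ℝ (powSet m i)).map f :=
      ⟨_, subset_span ⟨a, rfl⟩, rfl⟩
    rwa [hbot, Submodule.mem_bot] at hmm
  set q : MvPolynomial (Fin m) ℝ :=
    ∑ β ∈ piAntidiag (univ : Finset (Fin m)) i,
      C ((Nat.multinomial univ β : ℝ) * f (∏ t, X t ^ β t)) * ∏ t, X t ^ β t with hqdef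
  have hq0 : q = 0 := by
    apply MvPolynomial.funext
    intro a
    have h := hf0 a
    rw [pow_linear_expand, map_sum] at h
    simp only [MvPolynomial.C_mul', map_smul, smul_eq_mul] at h
    rw [hqdef, map_sum, map_zero]
    simp only [map_mul, eval_C, map_prod, map_pow, eval_X]
    rw [← h]
    exact Finset.sum_congr rfl fun β _ => by ring
  have hcoeff : (Nat.multinomial univ α : ℝ) * f (∏ t, X t ^ α t) = 0 := by
    have h := congrArg (coeff (Finsupp.equivFunOnFinite.symm α)) hq0
    rw [hqdef] at h
    simp only [coeff_zero] at h
    rw [Finset.sum_congr rfl (fun β _ => by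
        rw [prod_X_pow_eq, C_mul_monomial, mul_one])] at h
    rw [MvPolynomial.coeff_sum] at h
    rw [Finset.sum_eq_single_of_mem α hα (fun β _ hβ => by
        rw [coeff_monomial, if_neg]
        exact fun hc => hβ (Finsupp.equivFunOnFinite.symm.injective hc))] at h
    rw [coeff_monomial, if_pos rfl] at h
    rw [prod_X_pow_eq]
    exact h
  have hmul : (Nat.multinomial univ α : ℝ) ≠ 0 := by
    exact_mod_cast (Nat.multinomial_pos _ _).ne'
  rcases mul_eq_zero.mp hcoeff with h | h
  · exact hmul h
  · exact hfα h

lemma homog_rep (i : ℕ) (q : MvPolynomial (Fin m) ℝ) (hq : q.IsHomogeneous i) :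
    ∃ (c : ℕ → ℝ) (v : ℕ → Fin m → ℝ), ∀ x : Fin m → ℝ,
      eval x q = ∑ d ∈ Finset.range ((m + i - 1).choose i),
        c d * (∑ t, x t * v d t) ^ i := by
  classical
  set S := powSet m i with hS
  set Ms : Finset (MvPolynomial (Fin m) ℝ) :=
    (piAntidiag (univ : Finset (Fin m)) i).image (fun β => ∏ t, X t ^ β t) with hMs
  -- q is in the span of S
  have hqspan : q ∈ span ℝ S := by
    rw [← MvPolynomial.support_sum_monomial_coeff q]
    refine Submodule.sum_mem _ fun d hd => ?_
    have hdeg : (⇑d : Fin m → ℕ) ∈ piAntidiag (univ : Finset (Fin m)) i := by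
      rw [Finset.mem_piAntidiag]
      refine ⟨?_, fun _ _ => Finset.mem_univ _⟩
      have hw := hq (MvPolynomial.mem_support_iff.mp hd)
      rw [← hw, Finsupp.weight_apply]
      rw [Finsupp.sum_fintype]
      · simp
      · simp
    have hmono : (monomial d (1:ℝ)) ∈ span ℝ S := by
      have h := monomial_mem_span i (⇑d) hdeg
      rwa [prod_X_pow_eq, Finsupp.equivFunOnFinite_symm_coe] at h
    have heq : monomial d (coeff d q) = (coeff d q) • monomial d (1:ℝ) := by
      rw [MvPolynomial.smul_monomial, smul_eq_mul, mul_one]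
    rw [heq]
    exact Submodule.smul_mem _ _ hmono
  -- S is contained in span of the monomials
  have hSsub : S ⊆ (span ℝ (Ms : Set (MvPolynomial (Fin m) ℝ)) : Set _) := by
    rintro _ ⟨a, rfl⟩
    rw [SetLike.mem_coe]
    dsimp only
    rw [pow_linear_expand]
    refine Submodule.sum_mem _ fun β hβ => ?_
    rw [MvPolynomial.C_mul']
    exact Submodule.smul_mem _ _
      (subset_span (Finset.mem_coe.mpr (Finset.mem_image_of_mem _ hβ)))
  -- extract a linearly independent subset
  obtain ⟨T, hTS, hTspan, hTind⟩ := exists_linearIndependent ℝ S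
  have hrange : Set.range ((↑) : T → MvPolynomial (Fin m) ℝ)
      ≤ span ℝ (Ms : Set (MvPolynomial (Fin m) ℝ)) := by
    rw [Subtype.range_coe]; exact hTS.trans hSsub
  haveI hfin : Finite T := hTind.finite_of_le_span_finite _ _ hrange
  haveI : Fintype T := Fintype.ofFinite _
  have hcardT : (Fintype.card T : Cardinal)
      ≤ Fintype.card (Ms : Set (MvPolynomial (Fin m) ℝ)) := by
    rw [← Cardinal.mk_fintype]
    exact linearIndependent_le_span' _ hTind _ hrange
  have hcardT' : Fintype.card T ≤ Fintype.card (Ms : Set (MvPolynomial (Fin m) ℝ)) := by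
    exact_mod_cast hcardT
  set F := T.toFinset with hF
  have hFcoe : (F : Set (MvPolynomial (Fin m) ℝ)) = T := Set.coe_toFinset T
  have hFcard : F.card ≤ (m + i - 1).choose i := by
    have h1 : Fintype.card (Ms : Set (MvPolynomial (Fin m) ℝ)) = Ms.card := by simp
    have h2 : Ms.card ≤ (piAntidiag (univ : Finset (Fin m)) i).card :=
      Finset.card_image_le
    have h3 : (piAntidiag (univ : Finset (Fin m)) i).card ≤ (m + i - 1).choose i := by
      rw [← Finset.map_sym_eq_piAntidiag, Finset.card_map]
      calc ((univ : Finset (Fin m)).sym i).card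
          ≤ Fintype.card (Sym (Fin m) i) := Finset.card_le_univ _
        _ = (m + i - 1).choose i := by rw [Sym.card_sym_eq_choose, Fintype.card_fin]
    have h4 : F.card = Fintype.card T := Set.toFinset_card T
    omega
  -- representation of q over F
  have hqF : q ∈ span ℝ (F : Set (MvPolynomial (Fin m) ℝ)) := by
    rw [hFcoe]
    rw [hTspan]
    exact hqspan
  obtain ⟨g, -, hg⟩ := mem_span_finset.mp hqF
  -- choose linear forms for elements of F
  have hchoice : ∀ e ∈ F, ∃ a : Fin m → ℝ, (∑ t, C (a t) * X t) ^ i = e := by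
    intro e he
    exact hTS (Set.mem_toFinset.mp he)
  choose! A hA using hchoice
  -- build the coefficient functions
  let eF : ℕ → MvPolynomial (Fin m) ℝ := fun d =>
    if h : d < F.card then (F.equivFin.symm ⟨d, h⟩ : MvPolynomial (Fin m) ℝ) else 0
  let cc : ℕ → ℝ := fun d => if d < F.card then g (eF d) else 0
  let vv : ℕ → Fin m → ℝ := fun d => if d < F.card then A (eF d) else 0
  refine ⟨cc, vv, fun x => ?_⟩
  have heval : eval x q = ∑ e ∈ F, g e * eval x e := by
    rw [← hg, map_sum]
    exact Finset.sum_congr rfl fun e _ => by rw [MvPolynomial.smul_eq_C_mul, map_mul, eval_C]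
  have hzero : ∀ d ∈ Finset.range ((m + i - 1).choose i), d ∉ Finset.range F.card →
      cc d * (∑ t, x t * vv d t) ^ i = 0 := by
    intro d _ hd
    have hnot : ¬ d < F.card := by simpa using hd
    simp only [cc, if_neg hnot, zero_mul]
  have ext := Finset.sum_subset (Finset.range_subset_range.mpr hFcard) hzero
  rw [heval, ← ext]
  rw [Finset.sum_range (fun d => cc d * (∑ t, x t * vv d t) ^ i)]
  rw [← Finset.sum_coe_sort F (fun e => g e * eval x e)]
  refine Fintype.sum_equiv F.equivFin _ _ fun e => ?_
  have hlt : ((F.equivFin e : Fin F.card) : ℕ) < F.card := (F.equivFin e).2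
  have heF : eF ((F.equivFin e : Fin F.card) : ℕ) = (e : MvPolynomial (Fin m) ℝ) := by
    simp only [eF, dif_pos hlt, Fin.eta, Equiv.symm_apply_apply]
  simp only [cc, vv, if_pos hlt, heF]
  congr 1
  have he : (∑ t, C (A (e : MvPolynomial (Fin m) ℝ) t) * X t) ^ i
      = (e : MvPolynomial (Fin m) ℝ) := hA e (Finset.coe_mem e)
  conv_lhs => rw [← he]
  rw [map_pow, map_sum]
  simp only [map_mul, eval_C, eval_X]
  congr 1
  exact Finset.sum_congr rfl fun t _ => mul_comm _ _

end ChuiLiAux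

/-- **Realization of multivariate polynomials as linear combinations of powers of
linear forms** (Chui–Li).

Let `p` be a real polynomial in `m` variables of total degree at most `k`, and let
`n_i = (m + i - 1).choose i` be the number of monomials of total degree exactly `i` in
`m` variables.  Then there are coefficients `c i d ∈ ℝ` and vectors `v i d ∈ ℝ^m`
(for `0 ≤ i ≤ k`, `d < n_i`) such that
`p x = ∑_{i=0}^{k} ∑_{d < n_i} c i d * ⟨x, v i d⟩ ^ i` for all `x`, where
`⟨x, v⟩ = ∑ t, x t * v t` is the standard Euclidean inner product on `ℝ^m`. -/
theorem polynomial_eq_sum_powers_of_linear_forms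
    (m k : ℕ) (hm : 1 ≤ m) (hk : 1 ≤ k)
    (p : MvPolynomial (Fin m) ℝ) (hp : p.totalDegree ≤ k) :
    ∃ (c : ℕ → ℕ → ℝ) (v : ℕ → ℕ → (Fin m → ℝ)),
      ∀ x : Fin m → ℝ,
        MvPolynomial.eval x p =
          ∑ i ∈ Finset.range (k + 1), ∑ d ∈ Finset.range ((m + i - 1).choose i),
            c i d * (∑ t : Fin m, x t * v i d t) ^ i := by
  have H : ∀ i : ℕ, ∃ (c : ℕ → ℝ) (v : ℕ → Fin m → ℝ), ∀ x : Fin m → ℝ,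
      MvPolynomial.eval x (MvPolynomial.homogeneousComponent i p) =
        ∑ d ∈ Finset.range ((m + i - 1).choose i), c d * (∑ t, x t * v d t) ^ i :=
    fun i => ChuiLiAux.homog_rep i _ (MvPolynomial.homogeneousComponent_isHomogeneous i p)
  choose c v hcv using H
  refine ⟨c, v, fun x => ?_⟩
  have hsum : ∑ i ∈ Finset.range (k + 1), MvPolynomial.homogeneousComponent i p = p := by
    have h1 : ∑ i ∈ Finset.range (p.totalDegree + 1),
        MvPolynomial.homogeneousComponent i p
        = ∑ i ∈ Finset.range (k + 1), MvPolynomial.homogeneousComponent i p := by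
      refine Finset.sum_subset (Finset.range_subset_range.mpr (by omega)) fun i _ hi => ?_
      refine MvPolynomial.homogeneousComponent_eq_zero i p ?_
      rw [Finset.mem_range, not_lt] at hi
      omega
    rw [← h1, MvPolynomial.sum_homogeneousComponent]
  calc MvPolynomial.eval x p
      = ∑ i ∈ Finset.range (k + 1),
          MvPolynomial.eval x (MvPolynomial.homogeneousComponent i p) := by
        rw [← map_sum, hsum]
    _ = ∑ i ∈ Finset.range (k + 1), ∑ d ∈ Finset.range ((m + i - 1).choose i),
          c i d * (∑ t : Fin m, x t * v i d t) ^ i :=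
        Finset.sum_congr rfl fun i _ => hcv i x
end

section
/- Let ψ : ℝ^m → ℂ admit a separated finite-sum representation ψ(x_1,…,x_m) = Σ_{n=1}^L ∏_{i=1}^m f_{i,n}(x_i) for functions f_{i,n} : ℝ → ℂ. Then for Hermitian N×N matrices A_1,…,A_m with fixed spectral decompositions (with eigenvalues λ_{i,1},…,λ_{i,N}) and N×N matrices X_1,…,X_{m−1}, the operator norm of the multiple operator integral satisfies ‖T^{A_1,…,A_m}_ψ(X_1,…,X_{m−1})‖ ≤ (Σ_{n=1}^L ∏_{i=1}^m max_{1≤j≤N} |f_{i,n}(λ_{i,j})|) · ∏_{i=1}^{m−1} ‖X_i‖, where ‖·‖ denotes the operator norm on N×N complex matrices induced by the Euclidean norm on ℂ^N. -/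
open Matrix

/-- A fixed spectral decomposition of a Hermitian `N × N` complex matrix: real
eigenvalues `lam j` and an orthonormal family of eigenvectors `u j` (an orthonormal
family of `N` vectors in `ℂ^N`, hence an orthonormal basis). -/
structure SpectralDecomp (N : ℕ) where
  /-- the eigenvalues -/
  lam : Fin N → ℝ
  /-- the orthonormal eigenbasis -/
  u : Fin N → (Fin N → ℂ)
  /-- orthonormality of the eigenbasis -/
  orthonormal : ∀ j k : Fin N, star (u j) ⬝ᵥ u k = if j = k then 1 else 0

namespace SpectralDecomp

variable {N : ℕ}

/-- The rank-one spectral projection `P j = u j (u j)^*`. -/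
noncomputable def P (S : SpectralDecomp N) (j : Fin N) : Matrix (Fin N) (Fin N) ℂ :=
  vecMulVec (S.u j) (star (S.u j))

/-- The Hermitian matrix `A = ∑ j, lam j • P j` with the given spectral decomposition. -/
noncomputable def A (S : SpectralDecomp N) : Matrix (Fin N) (Fin N) ℂ :=
  ∑ j : Fin N, (S.lam j : ℂ) • S.P j

end SpectralDecomp

/-- The finite-dimensional **multiple operator integral**
`T^{A_0,…,A_{m-1}}_ψ(X_0,…,X_{m-2}) = ∑_{j_0,…,j_{m-1}} ψ(λ_{0,j_0},…,λ_{m-1,j_{m-1}})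
P_{0,j_0} X_0 P_{1,j_1} X_1 ⋯ X_{m-2} P_{m-1,j_{m-1}}`, for spectral decompositions
`S 0, …, S (m-1)` of the Hermitian matrices `A_0, …, A_{m-1}`, a function `ψ` of `m` real
variables, and matrices `X 0, …, X (m-2)`. -/
noncomputable def MOI {N : ℕ} (m : ℕ) (ψ : (Fin m → ℝ) → ℂ)
    (S : ℕ → SpectralDecomp N) (X : ℕ → Matrix (Fin N) (Fin N) ℂ) :
    Matrix (Fin N) (Fin N) ℂ :=
  ∑ j : Fin m → Fin N,
    ψ (fun i => (S i.val).lam (j i)) •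
      (List.ofFn fun i : Fin m =>
        (if (i : ℕ) = 0 then 1 else X ((i : ℕ) - 1)) * (S i.val).P (j i)).prod


lemma ofFn_prod_sum {R : Type*} [NonAssocSemiring R] {κ : Type*} [Fintype κ] :
    ∀ (m : ℕ) (M : Fin m → κ → R),
      ∑ j : Fin m → κ, (List.ofFn fun i => M i (j i)).prod
        = (List.ofFn fun i => ∑ k : κ, M i k).prod
  | 0, M => by simp
  | (m+1), M => by
    rw [← Equiv.sum_comp (Fin.consEquiv (fun _ : Fin (m+1) => κ))
      (fun j => (List.ofFn fun i => M i (j i)).prod), Fintype.sum_prod_type]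
    have key : ∀ (k : κ) (j : Fin m → κ),
        (List.ofFn fun i : Fin (m+1) => M i (Fin.consEquiv (fun _ => κ) (k, j) i)).prod
          = M 0 k * (List.ofFn fun i : Fin m => M i.succ (j i)).prod := by
      intro k j
      rw [List.ofFn_succ, List.prod_cons]
      simp [Fin.consEquiv]
    simp only [key]
    rw [List.ofFn_succ, List.prod_cons, ← ofFn_prod_sum m (fun i => M i.succ),
      Finset.sum_mul]
    congr 1
    ext k
    rw [← Finset.mul_sum]

lemma ofFn_smul_prod {R : Type*} [Semiring R] [Module ℂ R] [SMulCommClass ℂ R R]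
    [IsScalarTower ℂ R R] :
    ∀ (m : ℕ) (c : Fin m → ℂ) (g : Fin m → R),
      (List.ofFn fun i => c i • g i).prod = (∏ i, c i) • (List.ofFn g).prod
  | 0, c, g => by simp
  | (m+1), c, g => by
    rw [List.ofFn_succ, List.prod_cons, List.ofFn_succ, List.prod_cons,
      ofFn_smul_prod m (fun i => c i.succ) (fun i => g i.succ),
      smul_mul_assoc, mul_smul_comm, smul_smul, Fin.prod_univ_succ]

open scoped Matrix.Norms.L2Operator in
lemma l2_opNorm_diagonal_le {N : ℕ} (c : Fin N → ℂ) (M : ℝ) (hM0 : 0 ≤ M)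
    (hM : ∀ j, ‖c j‖ ≤ M) : ‖(Matrix.diagonal c : Matrix (Fin N) (Fin N) ℂ)‖ ≤ M := by
  rw [Matrix.l2_opNorm_def]
  refine ContinuousLinearMap.opNorm_le_bound _ hM0 fun x => ?_
  show ‖Matrix.toEuclideanLin (Matrix.diagonal c) x‖ ≤ M * ‖x‖
  rw [Matrix.toEuclideanLin_apply]
  rw [EuclideanSpace.norm_eq, EuclideanSpace.norm_eq]
  have h1 : ∑ i, ‖(WithLp.equiv 2 (Fin N → ℂ)).symm
      (Matrix.diagonal c *ᵥ (WithLp.equiv 2 (Fin N → ℂ)) x) i‖ ^ 2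
      ≤ ∑ i, M ^ 2 * ‖x i‖ ^ 2 := by
    refine Finset.sum_le_sum fun i _ => ?_
    have : (WithLp.equiv 2 (Fin N → ℂ)).symm
        (Matrix.diagonal c *ᵥ (WithLp.equiv 2 (Fin N → ℂ)) x) i = c i * x i := by
      simp [Matrix.mulVec_diagonal]
    rw [this, norm_mul, mul_pow]
    exact mul_le_mul_of_nonneg_right (pow_le_pow_left₀ (norm_nonneg _) (hM i) 2) (sq_nonneg _)
  calc Real.sqrt (∑ i, ‖(WithLp.equiv 2 (Fin N → ℂ)).symm
        (Matrix.diagonal c *ᵥ (WithLp.equiv 2 (Fin N → ℂ)) x) i‖ ^ 2)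
      ≤ Real.sqrt (∑ i, M ^ 2 * ‖x i‖ ^ 2) := Real.sqrt_le_sqrt h1
    _ = M * Real.sqrt (∑ i, ‖x i‖ ^ 2) := by
        rw [← Finset.mul_sum, Real.sqrt_mul (sq_nonneg M), Real.sqrt_sq hM0]

open scoped Matrix.Norms.L2Operator in
lemma SpectralDecomp.norm_sum_smul_P_le {N : ℕ} (hN : 0 < N) (S : SpectralDecomp N)
    (c : Fin N → ℂ) (M : ℝ) (hM : ∀ j, ‖c j‖ ≤ M) :
    ‖∑ j, c j • S.P j‖ ≤ M := by
  have hnt : Nontrivial (Matrix (Fin N) (Fin N) ℂ) :=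
    ⟨0, 1, fun h => one_ne_zero (α := ℂ)
      (by rw [← Matrix.one_apply_eq (⟨0, hN⟩ : Fin N), ← h, Matrix.zero_apply])⟩
  have hM0 : 0 ≤ M := le_trans (norm_nonneg _) (hM ⟨0, hN⟩)
  set U : Matrix (Fin N) (Fin N) ℂ := Matrix.of fun a j => S.u j a with hU
  have h1 : Uᴴ * U = 1 := by
    ext j k
    have := S.orthonormal j k
    simp only [dotProduct, Pi.star_apply] at this
    simp only [Matrix.mul_apply, Matrix.conjTranspose_apply, Matrix.one_apply, hU,
      Matrix.of_apply]
    exact this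
  have hD : ∑ j, c j • S.P j = U * (Matrix.diagonal c * Uᴴ) := by
    ext a b
    simp only [Matrix.sum_apply, Matrix.smul_apply, SpectralDecomp.P,
      Matrix.vecMulVec_apply, Matrix.mul_apply, Matrix.diagonal_apply,
      Matrix.conjTranspose_apply, hU, Matrix.of_apply, ite_mul, zero_mul,
      Finset.sum_ite_eq, Finset.mem_univ, if_true, smul_eq_mul, Pi.star_apply]
    refine Finset.sum_congr rfl fun j _ => ?_
    ring
  have hUnorm : ‖U‖ = 1 := by
    have h2 := Matrix.l2_opNorm_conjTranspose_mul_self U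
    rw [h1, CStarRing.norm_one] at h2
    nlinarith [norm_nonneg U]
  have hUHnorm : ‖Uᴴ‖ = 1 := by rw [Matrix.l2_opNorm_conjTranspose, hUnorm]
  have hdiag : ‖Matrix.diagonal c‖ ≤ M := l2_opNorm_diagonal_le c M hM0 hM
  calc ‖∑ j, c j • S.P j‖ = ‖U * (Matrix.diagonal c * Uᴴ)‖ := by rw [hD]
    _ ≤ ‖U‖ * ‖Matrix.diagonal c * Uᴴ‖ := Matrix.l2_opNorm_mul _ _
    _ ≤ ‖U‖ * (‖Matrix.diagonal c‖ * ‖Uᴴ‖) := by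
        refine mul_le_mul_of_nonneg_left (Matrix.l2_opNorm_mul _ _) (norm_nonneg _)
    _ = ‖Matrix.diagonal c‖ := by rw [hUnorm, hUHnorm]; ring
    _ ≤ M := hdiag

open scoped Matrix.Norms.L2Operator

/-- **Norm estimate for a multiple operator integral with separated symbol.**

If `ψ(x_0,…,x_{m-1}) = ∑_{n<L} ∏_{i<m} f i n (x_i)`, then the operator norm (induced by
the Euclidean norm on `ℂ^N`) of the MOI satisfies
`‖T^{A_0,…,A_{m-1}}_ψ(X_0,…,X_{m-2})‖
  ≤ (∑_{n<L} ∏_{i<m} max_{j<N} ‖f i n (λ_{i,j})‖) · ∏_{i<m-1} ‖X i‖`. -/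
theorem MOI_norm_le {N : ℕ} (hN : 0 < N) (m L : ℕ) (hm : 1 ≤ m)
    (f : ℕ → ℕ → ℝ → ℂ) (ψ : (Fin m → ℝ) → ℂ)
    (hψ : ∀ x : Fin m → ℝ,
      ψ x = ∑ n ∈ Finset.range L, ∏ i : Fin m, f i.val n (x i))
    (S : ℕ → SpectralDecomp N) (X : ℕ → Matrix (Fin N) (Fin N) ℂ) :
    ‖MOI m ψ S X‖ ≤
      (∑ n ∈ Finset.range L, ∏ i ∈ Finset.range m,
          Finset.univ.sup' ⟨(⟨0, hN⟩ : Fin N), Finset.mem_univ _⟩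
            (fun j : Fin N => ‖f i n ((S i).lam j)‖)) *
        ∏ i ∈ Finset.range (m - 1), ‖X i‖ := by
  classical
  have hnt : Nontrivial (Matrix (Fin N) (Fin N) ℂ) :=
    ⟨0, 1, fun h => one_ne_zero (α := ℂ)
      (by rw [← Matrix.one_apply_eq (⟨0, hN⟩ : Fin N), ← h, Matrix.zero_apply])⟩
  set Y : Fin m → Matrix (Fin N) (Fin N) ℂ :=
    fun i => if (i : ℕ) = 0 then 1 else X ((i : ℕ) - 1) with hY
  set D : Fin m → ℕ → Matrix (Fin N) (Fin N) ℂ :=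
    fun i n => ∑ k : Fin N, f i.val n ((S i.val).lam k) • (S i.val).P k with hDdef
  set mx : ℕ → ℕ → ℝ := fun i n =>
    Finset.univ.sup' ⟨(⟨0, hN⟩ : Fin N), Finset.mem_univ _⟩
      (fun j : Fin N => ‖f i n ((S i).lam j)‖) with hmx
  have hmx_le : ∀ (i : Fin m) (n : ℕ) (j : Fin N),
      ‖f i.val n ((S i.val).lam j)‖ ≤ mx i.val n := fun i n j => by
    simpa only [hmx] using
      Finset.le_sup' (fun j : Fin N => ‖f i.val n ((S i.val).lam j)‖) (Finset.mem_univ j)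
  have hmx0 : ∀ (i : Fin m) (n : ℕ), 0 ≤ mx i.val n := fun i n =>
    le_trans (norm_nonneg _) (hmx_le i n ⟨0, hN⟩)
  have hMOI : MOI m ψ S X
      = ∑ n ∈ Finset.range L, (List.ofFn fun i : Fin m => Y i * D i n).prod := by
    unfold MOI
    simp only [hψ, Finset.sum_smul]
    rw [Finset.sum_comm]
    refine Finset.sum_congr rfl fun n _ => ?_
    have e1 : ∀ j : Fin m → Fin N,
        (∏ i, f i.val n ((S i.val).lam (j i))) •
          (List.ofFn fun i : Fin m => Y i * (S i.val).P (j i)).prod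
        = (List.ofFn fun i : Fin m =>
            f i.val n ((S i.val).lam (j i)) • (Y i * (S i.val).P (j i))).prod :=
      fun j => (ofFn_smul_prod m _ _).symm
    rw [Finset.sum_congr rfl fun j _ => e1 j]
    rw [ofFn_prod_sum m (fun i k => f i.val n ((S i.val).lam k) • (Y i * (S i.val).P k))]
    have e2 : (fun i : Fin m => ∑ k : Fin N, f i.val n ((S i.val).lam k) • (Y i * (S i.val).P k))
        = fun i => Y i * D i n := by
      funext i
      simp only [hDdef, Finset.mul_sum]
      exact Finset.sum_congr rfl fun k _ => (mul_smul_comm _ _ _).symm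
    rw [e2]
  rw [hMOI]
  refine le_trans (norm_sum_le _ _) ?_
  rw [Finset.sum_mul]
  refine Finset.sum_le_sum fun n _ => ?_
  have hlist : ‖(List.ofFn fun i : Fin m => Y i * D i n).prod‖
      ≤ ∏ i : Fin m, ‖Y i * D i n‖ := by
    have hne : (List.ofFn fun i : Fin m => Y i * D i n) ≠ [] := by
      simp only [ne_eq, List.ofFn_eq_nil_iff]
      omega
    refine le_trans (List.norm_prod_le' hne) (le_of_eq ?_)
    rw [List.map_ofFn, List.prod_ofFn]
    rfl
  have hY_norm : ∀ i : Fin m, ‖Y i‖ = if (i : ℕ) = 0 then 1 else ‖X ((i : ℕ) - 1)‖ := by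
    intro i
    by_cases h : (i : ℕ) = 0 <;> simp [hY, h]
  have hD_norm : ∀ i : Fin m, ‖D i n‖ ≤ mx i.val n := fun i =>
    SpectralDecomp.norm_sum_smul_P_le hN (S i.val) _ _ (hmx_le i n)
  have hterm : ∀ i : Fin m, ‖Y i * D i n‖
      ≤ (if (i : ℕ) = 0 then 1 else ‖X ((i : ℕ) - 1)‖) * mx i.val n := by
    intro i
    refine le_trans (Matrix.l2_opNorm_mul _ _) ?_
    rw [← hY_norm i]
    exact mul_le_mul_of_nonneg_left (hD_norm i) (norm_nonneg _)
  have hprod : ∏ i : Fin m, ‖Y i * D i n‖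
      ≤ ∏ i : Fin m, (if (i : ℕ) = 0 then 1 else ‖X ((i : ℕ) - 1)‖) * mx i.val n :=
    Finset.prod_le_prod (fun i _ => norm_nonneg _) (fun i _ => hterm i)
  refine le_trans hlist (le_trans hprod (le_of_eq ?_))
  rw [Finset.prod_mul_distrib]
  have h1 : ∏ i : Fin m, (if (i : ℕ) = 0 then (1:ℝ) else ‖X ((i : ℕ) - 1)‖)
      = ∏ i ∈ Finset.range (m - 1), ‖X i‖ := by
    rw [← Finset.prod_range (fun i : ℕ => if i = 0 then (1:ℝ) else ‖X (i - 1)‖)]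
    obtain ⟨k, rfl⟩ : ∃ k, m = k + 1 := ⟨m - 1, by omega⟩
    rw [Finset.prod_range_succ']
    simp
  have h2 : ∏ i : Fin m, mx i.val n = ∏ i ∈ Finset.range m, mx i n :=
    (Finset.prod_range (fun i => mx i n)).symm
  rw [h1, h2, mul_comm]
end

section
/- Fix m ≥ 1 and a position 1 ≤ j ≤ m + 1. Let A_1,…,A_m, C, D be Hermitian N×N complex matrices with fixed spectral decompositions, let X_1,…,X_m be N×N complex matrices, and let ψ₀ : ℝ^{m+1} → ℂ and ψ₁ : ℝ^{m+2} → ℂ be functions satisfying the divided-difference relation: for all y_1,…,y_{m+2} ∈ ℝ, (y_j − y_{j+1}) · ψ₁(y_1,…,y_{m+2}) = ψ₀(y_1,…,y_{j−1}, y_j, y_{j+2},…,y_{m+2}) − ψ₀(y_1,…,y_{j−1}, y_{j+1}, y_{j+2},…,y_{m+2}). Then the multiple operator integrals satisfy the perturbation formula T^{A_1,…,A_{j−1},C,A_j,…,A_m}_{ψ₀}(X_1,…,X_m) − T^{A_1,…,A_{j−1},D,A_j,…,A_m}_{ψ₀}(X_1,…,X_m) = T^{A_1,…,A_{j−1},C,D,A_j,…,A_m}_{ψ₁}(X_1,…,X_{j−1},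 C − D, X_j,…,X_m). -/
open Matrix

/-- Remove the entry at index `q` from a tuple of `m + 1` reals, giving a tuple of `m`
reals. -/
def removeAt {m : ℕ} (q : ℕ) (y : Fin (m + 1) → ℝ) : Fin m → ℝ :=
  fun i => if (i : ℕ) < q then y i.castSucc else y i.succ

-- auxiliary lemmas


lemma vecMulVec_mul_vecMulVec' {N : ℕ} (u v w x : Fin N → ℂ) :
    vecMulVec u v * vecMulVec w x = (v ⬝ᵥ w) • vecMulVec u x := by
  ext a b
  simp [Matrix.mul_apply, vecMulVec_apply, dotProduct, Finset.sum_mul, Finset.mul_sum]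
  apply Finset.sum_congr rfl; intros; ring

namespace SpectralDecomp
variable {N : ℕ}

lemma P_mul_P (S : SpectralDecomp N) (j k : Fin N) :
    S.P j * S.P k = if j = k then S.P j else 0 := by
  unfold P
  rw [vecMulVec_mul_vecMulVec', S.orthonormal j k]
  split <;> simp_all

lemma sum_P (S : SpectralDecomp N) : ∑ j, S.P j = 1 := by
  have h1 : (Matrix.of fun a k => S.u k a)ᴴ * (Matrix.of fun a k => S.u k a) = 1 := by
    ext j k
    simpa [Matrix.mul_apply, Matrix.conjTranspose_apply, dotProduct, Matrix.one_apply]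
      using S.orthonormal j k
  have h2 := (mul_eq_one_comm).mp h1
  ext a b
  have := congrFun (congrFun h2 a) b
  simp only [Matrix.mul_apply, Matrix.conjTranspose_apply, Matrix.of_apply] at this
  simp only [Matrix.sum_apply, P, vecMulVec_apply, Pi.star_apply, RCLike.star_def]
  simpa using this

lemma P_mul_A (S : SpectralDecomp N) (j : Fin N) :
    S.P j * S.A = (S.lam j : ℂ) • S.P j := by
  unfold A
  rw [Finset.mul_sum]
  rw [Finset.sum_eq_single j]
  · rw [mul_smul_comm, P_mul_P]; simp
  · intro k _ hk
    rw [mul_smul_comm, P_mul_P]; simp [Ne.symm hk]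
  · simp

lemma A_mul_P (S : SpectralDecomp N) (k : Fin N) :
    S.A * S.P k = (S.lam k : ℂ) • S.P k := by
  unfold A
  rw [Finset.sum_mul]
  rw [Finset.sum_eq_single k]
  · rw [smul_mul_assoc, P_mul_P]; simp
  · intro j _ hj
    rw [smul_mul_assoc, P_mul_P]; simp [hj]
  · simp

end SpectralDecomp

lemma ofFn_prod_merge {M : Type*} [Monoid M] :
    ∀ (n : ℕ) (g : Fin (n + 1) → M) (q : ℕ), q < n →
      (List.ofFn g).prod =
        (List.ofFn fun i : Fin n =>
          if (i : ℕ) < q then g i.castSucc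
          else if (i : ℕ) = q then g i.castSucc * g i.succ
          else g i.succ).prod := by
  intro n
  induction n with
  | zero => intro g q hq; omega
  | succ n ih =>
    intro g q hq
    rcases Nat.eq_zero_or_pos q with rfl | hq0
    · have hfun : (fun i : Fin (n + 1) =>
          if (i : ℕ) < 0 then g i.castSucc
          else if (i : ℕ) = 0 then g i.castSucc * g i.succ
          else g i.succ) =
          Fin.cons ((g 0 * g 1)) (fun i : Fin n => g i.succ.succ) := by
        funext i
        refine Fin.cases ?_ (fun i => ?_) i
        · simp
        · simp
      rw [hfun]
      rw [show List.ofFn g = g 0 :: List.ofFn (fun i => g i.succ) from List.ofFn_succ,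
        show List.ofFn (fun i : Fin (n+1) => g i.succ)
            = g 1 :: List.ofFn (fun i : Fin n => g i.succ.succ) from List.ofFn_succ,
        List.ofFn_succ]
      simp [mul_assoc]
    · obtain ⟨q', rfl⟩ : ∃ q', q = q' + 1 := ⟨q - 1, by omega⟩
      rw [show List.ofFn g = g 0 :: List.ofFn (fun i => g i.succ) from List.ofFn_succ,
        List.prod_cons, ih (fun i => g i.succ) q' (by omega), List.ofFn_succ, List.prod_cons]
      congr 1
      · simp

lemma ofFn_prod_smul {R A : Type*} [CommSemiring R] [Semiring A] [Algebra R A]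
    {n : ℕ} (g h : Fin n → A) (q : Fin n) (c : R)
    (hq : g q = c • h q) (hne : ∀ i, i ≠ q → g i = h i) :
    (List.ofFn g).prod = c • (List.ofFn h).prod := by
  have h1 : g = Function.update h q (c • h q) := by
    funext i
    rcases eq_or_ne i q with rfl | hi
    · simpa using hq
    · rw [Function.update_of_ne hi]; exact hne i hi
  calc (List.ofFn g).prod = MultilinearMap.mkPiAlgebraFin R n A g := by
        rw [MultilinearMap.mkPiAlgebraFin_apply]
    _ = c • MultilinearMap.mkPiAlgebraFin R n A (Function.update h q (h q)) := by
        rw [h1, MultilinearMap.map_update_smul]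
    _ = c • (List.ofFn h).prod := by
        rw [Function.update_eq_self, MultilinearMap.mkPiAlgebraFin_apply]

lemma ofFn_prod_sum_s7 {R A : Type*} [CommSemiring R] [Semiring A] [Algebra R A]
    {n : ℕ} {α : Type*} [Fintype α] (g : α → Fin n → A) (h : Fin n → A) (q : Fin n)
    (hg : ∀ a i, i ≠ q → g a i = h i) (hsum : ∑ a, g a q = h q) :
    ∑ a, (List.ofFn (g a)).prod = (List.ofFn h).prod := by
  have h1 : ∀ a, g a = Function.update h q (g a q) := by
    intro a; funext i
    rcases eq_or_ne i q with rfl | hi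
    · simp
    · rw [Function.update_of_ne hi]; exact hg a i hi
  calc ∑ a, (List.ofFn (g a)).prod
      = ∑ a, MultilinearMap.mkPiAlgebraFin R n A (Function.update h q (g a q)) := by
        refine Finset.sum_congr rfl fun a _ => ?_
        rw [← h1 a, MultilinearMap.mkPiAlgebraFin_apply]
    _ = MultilinearMap.mkPiAlgebraFin R n A (Function.update h q (∑ a, g a q)) := by
        rw [MultilinearMap.map_update_sum]
    _ = (List.ofFn h).prod := by
        rw [hsum, Function.update_eq_self, MultilinearMap.mkPiAlgebraFin_apply]

lemma removeAt_comp {m : ℕ} (q : Fin (m + 2)) (y : Fin (m + 2) → ℝ) :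
    removeAt (q : ℕ) y = fun i => y (q.succAbove i) := by
  funext i
  simp only [removeAt, Fin.succAbove, Fin.lt_def, Fin.coe_castSucc]
  split <;> rfl

lemma succAbove_val {m : ℕ} (q : Fin (m + 2)) (i : Fin (m + 1)) :
    ((q.succAbove i : Fin (m + 2)) : ℕ) = if (i : ℕ) < (q : ℕ) then (i : ℕ) else (i : ℕ) + 1 := by
  simp only [Fin.succAbove, Fin.lt_def, Fin.coe_castSucc]
  split <;> rfl


/-- **Perturbation formula for multiple operator integrals.**

Let `ψ₁` be a first-order divided difference of `ψ₀` in the variable at (0-based)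
position `p ≤ m`, i.e. `(y_p − y_{p+1}) ψ₁(y) = ψ₀(y \ y_{p+1}) − ψ₀(y \ y_p)` for all
`y ∈ ℝ^{m+2}`.  Then for Hermitian matrices `A_0,…,A_{m-1}, C, D` with fixed spectral
decompositions `S 0,…,S (m-1), SC, SD` and matrices `X 0,…,X (m-1)`,
`T^{A_0,…,A_{p-1},C,A_p,…,A_{m-1}}_{ψ₀}(X_0,…,X_{m-1})
 − T^{A_0,…,A_{p-1},D,A_p,…,A_{m-1}}_{ψ₀}(X_0,…,X_{m-1})
 = T^{A_0,…,A_{p-1},C,D,A_p,…,A_{m-1}}_{ψ₁}(X_0,…,X_{p-1}, C − D, X_p,…,X_{m-1})`. -/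
theorem MOI_perturbation {N : ℕ} (m : ℕ) (hm : 1 ≤ m) (p : ℕ) (hp : p ≤ m)
    (S : ℕ → SpectralDecomp N) (SC SD : SpectralDecomp N)
    (X : ℕ → Matrix (Fin N) (Fin N) ℂ)
    (ψ₀ : (Fin (m + 1) → ℝ) → ℂ) (ψ₁ : (Fin (m + 2) → ℝ) → ℂ)
    (hdd : ∀ y : Fin (m + 2) → ℝ,
      ((y ⟨p, by omega⟩ - y ⟨p + 1, by omega⟩ : ℝ) : ℂ) * ψ₁ y =
        ψ₀ (removeAt (p + 1) y) - ψ₀ (removeAt p y)) :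
    MOI (m + 1) ψ₀
        (fun i => if i < p then S i else if i = p then SC else S (i - 1)) X -
      MOI (m + 1) ψ₀
        (fun i => if i < p then S i else if i = p then SD else S (i - 1)) X =
      MOI (m + 2) ψ₁
        (fun i => if i < p then S i else if i = p then SC
          else if i = p + 1 then SD else S (i - 2))
        (fun i => if i < p then X i else if i = p then SC.A - SD.A else X (i - 1)) := by
  classical
  set SL : ℕ → SpectralDecomp N :=
    fun i => if i < p then S i else if i = p then SC else S (i - 1) with hSL
  set SR : ℕ → SpectralDecomp N :=
    fun i => if i < p then S i else if i = p then SD else S (i - 1) with hSR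
  set S2 : ℕ → SpectralDecomp N :=
    fun i => if i < p then S i else if i = p then SC
      else if i = p + 1 then SD else S (i - 2) with hS2
  set X2 : ℕ → Matrix (Fin N) (Fin N) ℂ :=
    fun i => if i < p then X i else if i = p then SC.A - SD.A else X (i - 1) with hX2
  set pf : Fin (m + 2) := ⟨p, by omega⟩ with hpf
  set pf1 : Fin (m + 2) := ⟨p + 1, by omega⟩ with hpf1
  set pm : Fin (m + 1) := ⟨p, by omega⟩ with hpm
  set g : (Fin (m + 2) → Fin N) → Fin (m + 2) → Matrix (Fin N) (Fin N) ℂ :=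
    fun j i => (if (i : ℕ) = 0 then 1 else X2 ((i : ℕ) - 1)) * (S2 i.val).P (j i) with hg
  set h : (Fin (m + 2) → Fin N) → Fin (m + 1) → Matrix (Fin N) (Fin N) ℂ :=
    fun j i =>
      if (i : ℕ) < p then g j i.castSucc
      else if (i : ℕ) = p then
        (if p = 0 then 1 else X (p - 1)) * (SC.P (j pf) * SD.P (j pf1))
      else g j i.succ with hh
  -- basic evaluations
  have hS2p : S2 p = SC := by rw [hS2]; simp
  have hS2p1 : S2 (p + 1) = SD := by
    rw [hS2]; simp only; rw [if_neg (by omega), if_neg (by omega)]; simp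
  have hX2p : X2 p = SC.A - SD.A := by
    rw [hX2]; simp only; rw [if_neg (by omega)]; simp
  -- Step 1: pointwise divided-difference identity
  have key : ∀ (E : Matrix (Fin N) (Fin N) ℂ) (a b : Fin N),
      (E * SC.P a) * ((SC.A - SD.A) * SD.P b)
        = ((SC.lam a - SD.lam b : ℝ) : ℂ) • (E * (SC.P a * SD.P b)) := by
    intro E a b
    have h1 : SC.P a * ((SC.A - SD.A) * SD.P b)
        = ((SC.lam a - SD.lam b : ℝ) : ℂ) • (SC.P a * SD.P b) := by
      rw [sub_mul, mul_sub, SD.A_mul_P, mul_smul_comm, ← mul_assoc, SC.P_mul_A,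
        smul_mul_assoc, ← sub_smul]
      congr 1
      push_cast
      ring
    rw [mul_assoc, h1, mul_smul_comm]
  have hpmv : ((pm : Fin (m + 1)) : ℕ) = p := rfl
  have hpfv : ((pf : Fin (m + 2)) : ℕ) = p := rfl
  have hpf1v : ((pf1 : Fin (m + 2)) : ℕ) = p + 1 := rfl
  have e1 : pm.castSucc = pf := rfl
  have e2 : pm.succ = pf1 := rfl
  have hXpre : (if p = 0 then (1 : Matrix (Fin N) (Fin N) ℂ) else X2 (p - 1))
      = (if p = 0 then 1 else X (p - 1)) := by
    split_ifs with h0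
    · rfl
    · rw [hX2]; simp only; rw [if_pos (by omega)]
  have step1 : ∀ j : Fin (m + 2) → Fin N,
      ψ₁ (fun i => (S2 i.val).lam (j i)) • (List.ofFn (g j)).prod
        = ψ₀ (removeAt (p + 1) (fun i => (S2 i.val).lam (j i))) • (List.ofFn (h j)).prod
          - ψ₀ (removeAt p (fun i => (S2 i.val).lam (j i))) • (List.ofFn (h j)).prod := by
    intro j
    have hc : (List.ofFn (g j)).prod
        = ((SC.lam (j pf) - SD.lam (j pf1) : ℝ) : ℂ) • (List.ofFn (h j)).prod := by
      rw [ofFn_prod_merge (m + 1) (g j) p (by omega)]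
      refine ofFn_prod_smul _ _ pm _ ?_ ?_
      · simp only [hpmv, lt_irrefl, if_false, if_pos rfl, e1, e2, hh, hg, hpfv, hpf1v]
        rw [hS2p, hS2p1, hXpre]
        have : (if p + 1 = 0 then (1 : Matrix (Fin N) (Fin N) ℂ) else X2 (p + 1 - 1))
            = SC.A - SD.A := by
          rw [if_neg (by omega), Nat.add_sub_cancel, hX2p]
        rw [this]
        exact key _ _ _
      · intro i hi
        have hip : (i : ℕ) ≠ p := by simpa [Fin.ext_iff] using hi
        simp only [hh]
        split_ifs <;> first | rfl | (exfalso; exact hip (by assumption))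
    rw [hc, smul_smul]
    have hy := hdd (fun i => (S2 i.val).lam (j i))
    have hy1 : S2 ((pf : Fin (m + 2)) : ℕ) = SC := by rw [hpfv, hS2p]
    have hy2 : S2 ((pf1 : Fin (m + 2)) : ℕ) = SD := by rw [hpf1v, hS2p1]
    rw [hy1, hy2] at hy
    rw [mul_comm (ψ₁ _), hy, sub_smul]
  -- values of `S2` along `succAbove`
  have hS2A : ∀ i : Fin (m + 1),
      S2 ((pf1.succAbove i : Fin (m + 2)) : ℕ) = SL ((i : Fin (m + 1)) : ℕ) := by
    intro i
    rw [succAbove_val, hpf1v, hS2, hSL]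
    simp only
    split_ifs <;> first | rfl | (congr 1; omega) | (exfalso; omega)
  have hS2B : ∀ i : Fin (m + 1),
      S2 ((pf.succAbove i : Fin (m + 2)) : ℕ) = SR ((i : Fin (m + 1)) : ℕ) := by
    intro i
    rw [succAbove_val, hpfv, hS2, hSR]
    simp only
    split_ifs <;> first | rfl | (congr 1; omega) | (exfalso; omega)
  have hSLp : SL p = SC := by rw [hSL]; simp
  have hSRp : SR p = SD := by rw [hSR]; simp
  -- Step 2: first reindexed sum gives the `C` term
  have stepA : ∑ j : Fin (m + 2) → Fin N,
      ψ₀ (removeAt (p + 1) (fun i => (S2 i.val).lam (j i))) • (List.ofFn (h j)).prod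
        = MOI (m + 1) ψ₀ SL X := by
    rw [← Equiv.sum_comp (Fin.insertNthEquiv (fun _ => Fin N) pf1), Fintype.sum_prod_type,
      Finset.sum_comm, MOI]
    refine Finset.sum_congr rfl fun j' _ => ?_
    simp only [Fin.insertNthEquiv_apply]
    have hsc : ∀ x : Fin N,
        removeAt (p + 1) (fun i => (S2 i.val).lam (Fin.insertNth (α := fun _ => Fin N) pf1 x j' i))
          = fun i : Fin (m + 1) => (SL i.val).lam (j' i) := by
      intro x
      rw [← hpf1v, removeAt_comp]
      funext i
      rw [Fin.insertNth_apply_succAbove, hS2A i]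
    have hsumprod : ∑ x : Fin N, (List.ofFn (h (Fin.insertNth (α := fun _ => Fin N) pf1 x j'))).prod
        = (List.ofFn (fun i : Fin (m + 1) =>
            (if (i : ℕ) = 0 then 1 else X ((i : ℕ) - 1)) * (SL i.val).P (j' i))).prod := by
      refine ofFn_prod_sum_s7 (R := ℂ) _ _ pm ?_ ?_
      · intro x i hi
        have hip : (i : ℕ) ≠ p := by simpa [Fin.ext_iff] using hi
        simp only [hh]
        by_cases h1 : (i : ℕ) < p
        · rw [if_pos h1]
          simp only [hg]
          have hsa : pf1.succAbove i = i.castSucc :=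
            Fin.succAbove_of_castSucc_lt _ _ (by rw [Fin.lt_def]; simp [hpf1v]; try omega)
          rw [← hsa, Fin.insertNth_apply_succAbove, hS2A i, succAbove_val, hpf1v,
            if_pos (by omega : (i : ℕ) < p + 1)]
          congr 1
          split_ifs with h0
          · rfl
          · rw [hX2]; simp only; rw [if_pos (by omega)]
        · rw [if_neg h1, if_neg hip]
          simp only [hg]
          have hsa : pf1.succAbove i = i.succ :=
            Fin.succAbove_of_le_castSucc _ _ (by rw [Fin.le_def]; simp [hpf1v]; try omega)
          rw [← hsa, Fin.insertNth_apply_succAbove, hS2A i, succAbove_val, hpf1v,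
            if_neg (by omega : ¬ (i : ℕ) < p + 1)]
          congr 1
          rw [if_neg (by omega), if_neg (by omega), hX2]
          simp only
          rw [if_neg (by omega), if_neg (by omega)]
          first
          | rfl
          | (congr 1; try omega)
      · have hmid : ∀ x : Fin N, h (Fin.insertNth (α := fun _ => Fin N) pf1 x j') pm
            = (if p = 0 then 1 else X (p - 1)) * (SC.P (j' pm) * SD.P x) := by
          intro x
          simp only [hh]
          rw [if_neg (lt_irrefl p), if_pos hpmv]
          have hsa : pf1.succAbove pm = pf := by
            rw [← e1]
            exact Fin.succAbove_of_castSucc_lt _ _ (by rw [Fin.lt_def]; simp [hpf1v]; try omega)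
          rw [Fin.insertNth_apply_same, ← hsa, Fin.insertNth_apply_succAbove]
        calc ∑ x : Fin N, h (Fin.insertNth (α := fun _ => Fin N) pf1 x j') pm
            = ∑ x : Fin N, (if p = 0 then 1 else X (p - 1)) * (SC.P (j' pm) * SD.P x) :=
              Finset.sum_congr rfl fun x _ => hmid x
          _ = (if p = 0 then 1 else X (p - 1)) * (SC.P (j' pm) * ∑ x : Fin N, SD.P x) := by
              rw [Finset.mul_sum, Finset.mul_sum]
          _ = (if p = 0 then 1 else X (p - 1)) * (SC.P (j' pm)) := by
              rw [SD.sum_P, mul_one]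
          _ = (if ((pm : Fin (m + 1)) : ℕ) = 0 then 1 else X (((pm : Fin (m + 1)) : ℕ) - 1))
                * (SL ((pm : Fin (m + 1)) : ℕ)).P (j' pm) := by
              rw [hpmv, hSLp]
    calc ∑ x : Fin N,
        ψ₀ (removeAt (p + 1) (fun i => (S2 i.val).lam (Fin.insertNth (α := fun _ => Fin N) pf1 x j' i)))
          • (List.ofFn (h (Fin.insertNth (α := fun _ => Fin N) pf1 x j'))).prod
        = ∑ x : Fin N, ψ₀ (fun i : Fin (m + 1) => (SL i.val).lam (j' i))
            • (List.ofFn (h (Fin.insertNth (α := fun _ => Fin N) pf1 x j'))).prod :=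
          Finset.sum_congr rfl fun x _ => by rw [hsc x]
      _ = ψ₀ (fun i : Fin (m + 1) => (SL i.val).lam (j' i))
            • ∑ x : Fin N, (List.ofFn (h (Fin.insertNth (α := fun _ => Fin N) pf1 x j'))).prod := by
          rw [Finset.smul_sum]
      _ = _ := by rw [hsumprod]
  have stepB : ∑ j : Fin (m + 2) → Fin N,
      ψ₀ (removeAt p (fun i => (S2 i.val).lam (j i))) • (List.ofFn (h j)).prod
        = MOI (m + 1) ψ₀ SR X := by
    rw [← Equiv.sum_comp (Fin.insertNthEquiv (fun _ => Fin N) pf), Fintype.sum_prod_type,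
      Finset.sum_comm, MOI]
    refine Finset.sum_congr rfl fun j' _ => ?_
    simp only [Fin.insertNthEquiv_apply]
    have hsc : ∀ x : Fin N,
        removeAt p (fun i => (S2 i.val).lam (Fin.insertNth (α := fun _ => Fin N) pf x j' i))
          = fun i : Fin (m + 1) => (SR i.val).lam (j' i) := by
      intro x
      rw [← hpfv, removeAt_comp]
      funext i
      rw [Fin.insertNth_apply_succAbove, hS2B i]
    have hsumprod : ∑ x : Fin N, (List.ofFn (h (Fin.insertNth (α := fun _ => Fin N) pf x j'))).prod
        = (List.ofFn (fun i : Fin (m + 1) =>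
            (if (i : ℕ) = 0 then 1 else X ((i : ℕ) - 1)) * (SR i.val).P (j' i))).prod := by
      refine ofFn_prod_sum_s7 (R := ℂ) _ _ pm ?_ ?_
      · intro x i hi
        have hip : (i : ℕ) ≠ p := by simpa [Fin.ext_iff] using hi
        simp only [hh]
        by_cases h1 : (i : ℕ) < p
        · rw [if_pos h1]
          simp only [hg]
          have hsa : pf.succAbove i = i.castSucc :=
            Fin.succAbove_of_castSucc_lt _ _ (by rw [Fin.lt_def]; simp [hpfv]; try omega)
          rw [← hsa, Fin.insertNth_apply_succAbove, hS2B i, succAbove_val, hpfv,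
            if_pos h1]
          congr 1
          split_ifs with h0
          · rfl
          · rw [hX2]; simp only; rw [if_pos (by omega)]
        · rw [if_neg h1, if_neg hip]
          simp only [hg]
          have hsa : pf.succAbove i = i.succ :=
            Fin.succAbove_of_le_castSucc _ _ (by rw [Fin.le_def]; simp [hpfv]; try omega)
          rw [← hsa, Fin.insertNth_apply_succAbove, hS2B i, succAbove_val, hpfv,
            if_neg h1]
          congr 1
          rw [if_neg (by omega), if_neg (by omega), hX2]
          simp only
          rw [if_neg (by omega), if_neg (by omega)]
          first
          | rfl
          | (congr 1; try omega)
      · have hmid : ∀ x : Fin N, h (Fin.insertNth (α := fun _ => Fin N) pf x j') pm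
            = (if p = 0 then 1 else X (p - 1)) * (SC.P x * SD.P (j' pm)) := by
          intro x
          simp only [hh]
          rw [if_neg (lt_irrefl p), if_pos hpmv]
          have hsa : pf.succAbove pm = pf1 := by
            rw [← e2]
            exact Fin.succAbove_of_le_castSucc _ _ (by rw [Fin.le_def]; simp [hpfv, hpmv])
          rw [Fin.insertNth_apply_same, ← hsa, Fin.insertNth_apply_succAbove]
        calc ∑ x : Fin N, h (Fin.insertNth (α := fun _ => Fin N) pf x j') pm
            = ∑ x : Fin N, (if p = 0 then 1 else X (p - 1)) * (SC.P x * SD.P (j' pm)) :=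
              Finset.sum_congr rfl fun x _ => hmid x
          _ = (if p = 0 then 1 else X (p - 1)) * ((∑ x : Fin N, SC.P x) * SD.P (j' pm)) := by
              rw [Finset.sum_mul, Finset.mul_sum]
          _ = (if p = 0 then 1 else X (p - 1)) * (SD.P (j' pm)) := by
              rw [SC.sum_P, one_mul]
          _ = (if ((pm : Fin (m + 1)) : ℕ) = 0 then 1 else X (((pm : Fin (m + 1)) : ℕ) - 1))
                * (SR ((pm : Fin (m + 1)) : ℕ)).P (j' pm) := by
              rw [hpmv, hSRp]
    calc ∑ x : Fin N,
        ψ₀ (removeAt p (fun i => (S2 i.val).lam (Fin.insertNth (α := fun _ => Fin N) pf x j' i)))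
          • (List.ofFn (h (Fin.insertNth (α := fun _ => Fin N) pf x j'))).prod
        = ∑ x : Fin N, ψ₀ (fun i : Fin (m + 1) => (SR i.val).lam (j' i))
            • (List.ofFn (h (Fin.insertNth (α := fun _ => Fin N) pf x j'))).prod :=
          Finset.sum_congr rfl fun x _ => by rw [hsc x]
      _ = ψ₀ (fun i : Fin (m + 1) => (SR i.val).lam (j' i))
            • ∑ x : Fin N, (List.ofFn (h (Fin.insertNth (α := fun _ => Fin N) pf x j'))).prod := by
          rw [Finset.smul_sum]
      _ = _ := by rw [hsumprod]
  calc MOI (m + 1) ψ₀ SL X - MOI (m + 1) ψ₀ SR X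
      = ∑ j : Fin (m + 2) → Fin N,
          (ψ₀ (removeAt (p + 1) (fun i => (S2 i.val).lam (j i))) • (List.ofFn (h j)).prod
            - ψ₀ (removeAt p (fun i => (S2 i.val).lam (j i))) • (List.ofFn (h j)).prod) := by
        rw [Finset.sum_sub_distrib, stepA, stepB]
    _ = MOI (m + 2) ψ₁ S2 X2 := by
        rw [MOI]
        exact (Finset.sum_congr rfl fun j _ => (step1 j)).symm
end

section
/- Let A and B be N×N complex matrices (or elements of any normed algebra over ℝ), and let n ≥ 1 and 1 ≤ k ≤ n. Then the k-th derivative at t = 0 of the function t ↦ (A + tB)^n exists and equals k! · Σ_{(a_0,…,a_k)} A^{a_0} B A^{a_1} B ⋯ B A^{a_k}, where the sum runs over all tuples (a_0,…,a_k) of nonnegative integers with a_0 + a_1 + ⋯ + a_k = n − k. -/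
open Finset

section Comb

lemma sum_antidiagonalTuple_succ {M : Type*} [AddCommMonoid M] (m N : ℕ)
    (f : (Fin (m + 1) → ℕ) → M) :
    ∑ a ∈ Finset.Nat.antidiagonalTuple (m + 1) N, f a =
      ∑ ij ∈ Finset.HasAntidiagonal.antidiagonal N, ∑ b ∈ Finset.Nat.antidiagonalTuple m ij.2,
        f (Fin.cons ij.1 b) := by
  rw [← Finset.sum_sigma (Finset.HasAntidiagonal.antidiagonal N)
    (fun ij => Finset.Nat.antidiagonalTuple m ij.2) (fun x => f (Fin.cons x.1.1 x.2))]
  refine Finset.sum_nbij'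
    (fun a : Fin (m + 1) → ℕ =>
      (⟨(a 0, ∑ i : Fin m, a i.succ), Fin.tail a⟩ : Σ _ij : ℕ × ℕ, Fin m → ℕ))
    (fun x : Σ _ij : ℕ × ℕ, Fin m → ℕ => Fin.cons x.1.1 x.2) ?_ ?_ ?_ ?_ ?_
  · intro a ha
    rw [Finset.Nat.mem_antidiagonalTuple] at ha
    simp only [Finset.mem_sigma, Finset.HasAntidiagonal.mem_antidiagonal,
      Finset.Nat.mem_antidiagonalTuple]
    rw [Fin.sum_univ_succ] at ha
    exact ⟨ha, rfl⟩
  · intro x hx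
    simp only [Finset.mem_sigma, Finset.HasAntidiagonal.mem_antidiagonal,
      Finset.Nat.mem_antidiagonalTuple] at hx ⊢
    rw [Fin.sum_univ_succ]
    simp [hx.2, hx.1]
  · intro a ha
    simp [Fin.cons_self_tail]
  · intro x hx
    simp only [Finset.mem_sigma, Finset.HasAntidiagonal.mem_antidiagonal,
      Finset.Nat.mem_antidiagonalTuple] at hx
    ext : 1
    · simp [hx.2]
    · simp
  · intro a ha
    simp [Fin.cons_self_tail]

variable {𝒜 : Type*} [Ring 𝒜] (A B : 𝒜)

/-- `∑_{b_1+⋯+b_m = j} B A^{b_1} ⋯ B A^{b_m}`. -/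
def auxQ (m j : ℕ) : 𝒜 :=
  ∑ b ∈ Finset.Nat.antidiagonalTuple m j, (List.ofFn fun i : Fin m => B * A ^ b i).prod

/-- `∑_{a_0+⋯+a_m = N} A^{a_0} B A^{a_1} ⋯ B A^{a_m}`. -/
def auxC (m N : ℕ) : 𝒜 :=
  ∑ a ∈ Finset.Nat.antidiagonalTuple (m + 1) N,
    (List.ofFn fun i : Fin (m + 1) => (if (i : ℕ) = 0 then 1 else B) * A ^ a i).prod

lemma auxC_eq (m N : ℕ) :
    auxC A B m N = ∑ ij ∈ Finset.HasAntidiagonal.antidiagonal N, A ^ ij.1 * auxQ A B m ij.2 := by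
  rw [auxC, sum_antidiagonalTuple_succ]
  refine Finset.sum_congr rfl fun ij _ => ?_
  rw [auxQ, Finset.mul_sum]
  refine Finset.sum_congr rfl fun b _ => ?_
  rw [List.ofFn_succ]
  simp [Fin.cons_zero, Fin.cons_succ]

lemma auxQ_succ (m j : ℕ) : auxQ A B (m + 1) j = B * auxC A B m j := by
  rw [auxQ, sum_antidiagonalTuple_succ, auxC_eq, Finset.mul_sum]
  refine Finset.sum_congr rfl fun ij _ => ?_
  rw [auxQ, Finset.mul_sum, Finset.mul_sum]
  refine Finset.sum_congr rfl fun b _ => ?_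
  rw [List.ofFn_succ]
  simp [Fin.cons_zero, Fin.cons_succ, mul_assoc]

lemma auxQ_zero_succ (j : ℕ) : auxQ A B 0 (j + 1) = 0 := by
  rw [auxQ]
  simp [Finset.Nat.antidiagonalTuple_zero_succ]

lemma auxC_zero_succ (N : ℕ) : auxC A B 0 (N + 1) = A * auxC A B 0 N := by
  rw [auxC_eq, auxC_eq, Finset.Nat.antidiagonal_succ, Finset.sum_cons, auxQ_zero_succ,
    Finset.sum_map, Finset.mul_sum]
  simp [pow_succ', mul_assoc]

lemma auxC_succ_zero (m : ℕ) : auxC A B (m + 1) 0 = B * auxC A B m 0 := by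
  rw [auxC_eq, Finset.Nat.antidiagonal_zero]
  simp [auxQ_succ]

lemma auxC_succ_succ (m N : ℕ) :
    auxC A B (m + 1) (N + 1) = A * auxC A B (m + 1) N + B * auxC A B m (N + 1) := by
  rw [auxC_eq A B (m+1) (N+1), Finset.Nat.antidiagonal_succ, Finset.sum_cons, Finset.sum_map,
    auxQ_succ, auxC_eq A B (m+1) N, Finset.mul_sum]
  rw [add_comm]
  congr 1
  · exact Finset.sum_congr rfl fun ij _ => by simp [pow_succ', mul_assoc]
  · simp

end Comb

section Expand

variable {𝒜 : Type*} [Ring 𝒜] [Algebra ℝ 𝒜] (A B : 𝒜)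

lemma pow_add_smul_expand (n : ℕ) (t : ℝ) :
    (A + t • B) ^ n = ∑ m ∈ Finset.range (n + 1), t ^ m • auxC A B m (n - m) := by
  induction n with
  | zero => simp [auxC, Finset.Nat.antidiagonalTuple_zero_right, List.ofFn_succ, List.ofFn_zero]
  | succ n ih =>
    rw [pow_succ', ih, add_mul, Finset.mul_sum, Finset.mul_sum]
    simp only [mul_smul_comm, smul_mul_assoc, smul_smul, ← pow_succ']
    have key : ∀ m ∈ Finset.range n,
        t ^ (m + 1) • auxC A B (m + 1) (n - m) =
          t ^ (m + 1) • (A * auxC A B (m + 1) (n - (m + 1))) +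
            t ^ (m + 1) • (B * auxC A B m (n - m)) := by
      intro m hm
      have hmn : m < n := Finset.mem_range.mp hm
      have h1 : n - m = (n - (m + 1)) + 1 := by omega
      rw [h1, auxC_succ_succ, smul_add]
    conv_rhs => rw [Finset.sum_range_succ' _ (n + 1)]
    simp only [Nat.succ_sub_succ, Nat.sub_zero, pow_zero]
    conv_rhs => rw [Finset.sum_range_succ _ n, Finset.sum_congr rfl key]
    conv_lhs => rw [Finset.sum_range_succ' _ n, Finset.sum_range_succ _ n]
    rw [Finset.sum_add_distrib, Nat.sub_self, auxC_succ_zero, auxC_zero_succ]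
    simp only [Nat.succ_sub_succ, Nat.sub_zero, Nat.sub_self, pow_zero]
    abel

end Expand

section Analysis

variable {𝒜 : Type*} [NormedRing 𝒜] [NormedAlgebra ℝ 𝒜]

lemma iteratedDeriv_poly (c : ℕ → 𝒜) (s : Finset ℕ) (k : ℕ) :
    iteratedDeriv k (fun t : ℝ => ∑ m ∈ s, t ^ m • c m) =
      fun t : ℝ => ∑ m ∈ s, ((m.descFactorial k : ℝ) * t ^ (m - k)) • c m := by
  induction k with
  | zero => simp
  | succ k ih =>
    rw [iteratedDeriv_succ, ih]
    funext t
    rw [deriv_fun_sum fun m _ =>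
      (((differentiableAt_const _).mul (differentiableAt_pow _)).smul_const _)]
    refine Finset.sum_congr rfl fun m _ => ?_
    rw [deriv_smul_const ((differentiableAt_const _).mul (differentiableAt_pow _)),
      deriv_const_mul _ (differentiableAt_pow _), deriv_pow_field]
    congr 1
    push_cast [Nat.descFactorial_succ, Nat.sub_sub]
    ring

end Analysis


/-- **The `k`-th derivative at `t = 0` of `t ↦ (A + tB)^n`.**

For elements `A, B` of a normed algebra over `ℝ` (e.g. the `N × N` complex matrices)
and `1 ≤ k ≤ n`, the function `t ↦ (A + tB)^n` is `k` times differentiable and its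
`k`-th derivative at `t = 0` equals
`k! · ∑_{a_0 + ⋯ + a_k = n - k} A^{a_0} B A^{a_1} B ⋯ B A^{a_k}`,
the sum running over all `(k+1)`-tuples of nonnegative integers with sum `n - k`. -/
theorem iteratedDeriv_pow_add_smul {𝒜 : Type*} [NormedRing 𝒜] [NormedAlgebra ℝ 𝒜]
    (A B : 𝒜) (n k : ℕ) (hn : 1 ≤ n) (hk : 1 ≤ k) (hkn : k ≤ n) :
    ContDiff ℝ k (fun t : ℝ => (A + t • B) ^ n) ∧
      iteratedDeriv k (fun t : ℝ => (A + t • B) ^ n) 0 =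
        k.factorial •
          ∑ a ∈ Finset.Nat.antidiagonalTuple (k + 1) (n - k),
            (List.ofFn fun i : Fin (k + 1) =>
              (if (i : ℕ) = 0 then 1 else B) * A ^ a i).prod := by
  have hexp : (fun t : ℝ => (A + t • B) ^ n)
      = fun t : ℝ => ∑ m ∈ Finset.range (n + 1), t ^ m • auxC A B m (n - m) :=
    funext fun t => pow_add_smul_expand A B n t
  constructor
  · exact (contDiff_const.add (contDiff_id.smul contDiff_const)).pow n
  · rw [hexp, iteratedDeriv_poly]
    rw [show (∑ a ∈ Finset.Nat.antidiagonalTuple (k + 1) (n - k),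
            (List.ofFn fun i : Fin (k + 1) =>
              (if (i : ℕ) = 0 then 1 else B) * A ^ a i).prod) = auxC A B k (n - k) from rfl]
    beta_reduce
    rw [Finset.sum_eq_single k]
    · rw [Nat.sub_self, pow_zero, mul_one, Nat.descFactorial_self, Nat.cast_smul_eq_nsmul]
    · intro m _ hmk
      rcases lt_or_gt_of_ne hmk with h | h
      · rw [Nat.descFactorial_eq_zero_iff_lt.mpr h]; simp
      · rw [zero_pow (by omega : m - k ≠ 0)]; simp
    · intro hk'
      exact absurd (Finset.mem_range.mpr (by omega)) hk'
end

section
/- Let X and H be elements of a (not necessarily commutative) ring, and let n ≥ 1 and 1 ≤ k ≤ n. Then (X + H)^n − Σ_{ℓ=0}^{k−1} (Σ_{(a_0,…,a_ℓ): a_i ≥ 0, a_0+⋯+a_ℓ = n−ℓ} X^{a_0} H X^{a_1} H ⋯ H X^{a_ℓ}) = Σ_{(a_0,…,a_k): a_i ≥ 0, a_0+⋯+a_k = n−k} (X + H)^{a_0} H X^{a_1} H ⋯ H X^{a_k}. (The subtracted ℓ-th inner sum is the ℓ-th Taylor term (1/ℓ!) d^ℓ (X + tH)^n/dt^ℓ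 |_{t=0}.) -/
open Finset

private def tpProd {R : Type*} [Ring R] (X H : R) (ℓ : ℕ) (t : Fin ℓ → ℕ) : R :=
  (List.ofFn fun i : Fin ℓ => H * X ^ t i).prod

private lemma tpProd_zero {R : Type*} [Ring R] (X H : R) (t : Fin 0 → ℕ) :
    tpProd X H 0 t = 1 := by
  simp [tpProd]

private lemma tpProd_succ {R : Type*} [Ring R] (X H : R) (ℓ : ℕ) (b : Fin (ℓ + 1) → ℕ) :
    tpProd X H (ℓ + 1) b = H * X ^ b 0 * (tpProd X H ℓ (Fin.tail b)) := by
  rw [tpProd, List.ofFn_succ, List.prod_cons]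
  rfl

private lemma tpProd_ite {R : Type*} [Ring R] (X H : R) (ℓ : ℕ) (a : Fin (ℓ + 1) → ℕ) :
    (List.ofFn fun i : Fin (ℓ + 1) =>
        (if (i : ℕ) = 0 then 1 else H) * X ^ a i).prod =
      X ^ a 0 * tpProd X H ℓ (Fin.tail a) := by
  rw [List.ofFn_succ, List.prod_cons]
  simp [tpProd, Fin.tail]

private lemma antidiagonalTuple_cons_sum {M : Type*} [AddCommMonoid M] (ℓ m : ℕ)
    (f : (Fin (ℓ + 1) → ℕ) → M) :
    ∑ a ∈ Finset.Nat.antidiagonalTuple (ℓ + 1) m, f a =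
      ∑ p ∈ Finset.HasAntidiagonal.antidiagonal m, ∑ t ∈ Finset.Nat.antidiagonalTuple ℓ p.2,
        f (Fin.cons p.1 t) := by
  rw [Finset.sum_sigma']
  refine Finset.sum_nbij'
    (i := fun a : Fin (ℓ + 1) → ℕ =>
      (⟨(a 0, ∑ i, Fin.tail a i), Fin.tail a⟩ : (_ : ℕ × ℕ) × (Fin ℓ → ℕ)))
    (j := fun q : (_ : ℕ × ℕ) × (Fin ℓ → ℕ) => Fin.cons q.1.1 q.2)
    ?_ ?_ ?_ ?_ ?_
  · intro a ha
    rw [Finset.Nat.mem_antidiagonalTuple] at ha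
    simp only [Finset.mem_sigma, Finset.Nat.mem_antidiagonalTuple, Finset.HasAntidiagonal.mem_antidiagonal]
    refine ⟨?_, trivial⟩
    rw [← ha, Fin.sum_univ_succ]
    rfl
  · intro q hq
    simp only [Finset.mem_sigma, Finset.Nat.mem_antidiagonalTuple,
      Finset.HasAntidiagonal.mem_antidiagonal] at hq
    rw [Finset.Nat.mem_antidiagonalTuple, Fin.sum_cons, hq.2, hq.1]
  · intro a ha
    exact Fin.cons_self_tail a
  · intro q hq
    simp only [Finset.mem_sigma, Finset.Nat.mem_antidiagonalTuple,
      Finset.HasAntidiagonal.mem_antidiagonal] at hq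
    refine Sigma.ext ?_ ?_
    · simp only [Fin.cons_zero, Fin.tail_cons, hq.2]
    · simp [Fin.tail_cons]
  · intro a ha
    rw [Fin.cons_self_tail]

private lemma add_pow_eq_pow_add_sum {R : Type*} [Ring R] (X H : R) (m : ℕ) :
    (X + H) ^ m = X ^ m + ∑ j ∈ Finset.range m, (X + H) ^ j * H * X ^ (m - 1 - j) := by
  induction m with
  | zero => simp
  | succ m ih =>
      have : (X + H) ^ (m + 1) = (X + H) ^ m * X + (X + H) ^ m * H := by
        rw [pow_succ, mul_add]
      rw [this, ih, Finset.sum_range_succ, add_mul, Finset.sum_mul, ← pow_succ]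
      have h2 : ∀ j ∈ Finset.range m,
          (X + H) ^ j * H * X ^ (m - 1 - j) * X = (X + H) ^ j * H * X ^ (m + 1 - 1 - j) := by
        intro j hj
        rw [Finset.mem_range] at hj
        rw [mul_assoc, ← pow_succ]
        congr 2
        omega
      rw [Finset.sum_congr rfl h2, ← ih]
      simp only [Nat.add_sub_cancel, Nat.sub_self, pow_zero, mul_one]
      rw [add_assoc]

private lemma triangle_sum {M : Type*} [AddCommMonoid M] (m : ℕ) (hm : 1 ≤ m)
    (g : ℕ → ℕ → ℕ → M) :
    ∑ p ∈ Finset.HasAntidiagonal.antidiagonal m, ∑ j ∈ Finset.range p.1, g j (p.1 - 1 - j) p.2 =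
      ∑ q ∈ Finset.HasAntidiagonal.antidiagonal (m - 1), ∑ r ∈ Finset.HasAntidiagonal.antidiagonal q.2, g q.1 r.1 r.2 := by
  obtain ⟨m', rfl⟩ : ∃ m', m = m' + 1 := ⟨m - 1, by omega⟩
  rw [Finset.Nat.sum_antidiagonal_eq_sum_range_succ
    (fun i q => ∑ j ∈ Finset.range i, g j (i - 1 - j) q)]
  rw [Nat.add_sub_cancel,
    Finset.Nat.sum_antidiagonal_eq_sum_range_succ
      (fun j s => ∑ r ∈ Finset.HasAntidiagonal.antidiagonal s, g j r.1 r.2)]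
  have : ∀ j ∈ Finset.range (m' + 1),
      (∑ r ∈ Finset.HasAntidiagonal.antidiagonal (m' - j), g j r.1 r.2)
        = ∑ c ∈ Finset.range (m' - j + 1), g j c (m' - j - c) :=
    fun j _ => Finset.Nat.sum_antidiagonal_eq_sum_range_succ (fun c q => g j c q) _
  rw [Finset.sum_congr rfl this]
  rw [Finset.sum_sigma', Finset.sum_sigma']
  refine Finset.sum_nbij'
    (i := fun p : (_ : ℕ) × ℕ => (⟨p.2, p.1 - 1 - p.2⟩ : (_ : ℕ) × ℕ))
    (j := fun p : (_ : ℕ) × ℕ => (⟨p.1 + p.2 + 1, p.1⟩ : (_ : ℕ) × ℕ))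
    ?_ ?_ ?_ ?_ ?_
  · rintro ⟨i, j⟩ h
    simp only [Finset.mem_sigma, Finset.mem_range] at h ⊢
    omega
  · rintro ⟨j, c⟩ h
    simp only [Finset.mem_sigma, Finset.mem_range] at h ⊢
    omega
  · rintro ⟨i, j⟩ h
    simp only [Finset.mem_sigma, Finset.mem_range] at h
    refine Sigma.ext ?_ ?_ <;> simp <;> omega
  · rintro ⟨j, c⟩ h
    simp only [Finset.mem_sigma, Finset.mem_range] at h
    refine Sigma.ext ?_ ?_ <;> simp <;> omega
  · rintro ⟨i, j⟩ h
    simp only [Finset.mem_sigma, Finset.mem_range] at h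
    have h1 : m' + 1 - (i : ℕ) = m' - j - (i - 1 - j) := by omega
    simp [h1]

private lemma remainder_step {R : Type*} [Ring R] (X H : R) (n k : ℕ) (hk : k < n) :
    ∑ a ∈ Finset.Nat.antidiagonalTuple (k + 1) (n - k),
        (X + H) ^ a 0 * tpProd X H k (Fin.tail a) =
      (∑ a ∈ Finset.Nat.antidiagonalTuple (k + 1) (n - k),
          X ^ a 0 * tpProd X H k (Fin.tail a)) +
        ∑ a ∈ Finset.Nat.antidiagonalTuple (k + 2) (n - (k + 1)),
          (X + H) ^ a 0 * tpProd X H (k + 1) (Fin.tail a) := by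
  set m := n - k with hm
  have hm1 : 1 ≤ m := by omega
  have hm2 : n - (k + 1) = m - 1 := by omega
  rw [hm2]
  rw [antidiagonalTuple_cons_sum (f := fun a => (X + H) ^ a 0 * tpProd X H k (Fin.tail a)),
    antidiagonalTuple_cons_sum (f := fun a => X ^ a 0 * tpProd X H k (Fin.tail a)),
    antidiagonalTuple_cons_sum (f := fun a => (X + H) ^ a 0 * tpProd X H (k + 1) (Fin.tail a))]
  simp only [Fin.cons_zero, Fin.tail_cons]
  have lhs_eq : ∀ p ∈ Finset.HasAntidiagonal.antidiagonal m,
      (∑ t ∈ Finset.Nat.antidiagonalTuple k p.2, (X + H) ^ p.1 * tpProd X H k t) =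
        (∑ t ∈ Finset.Nat.antidiagonalTuple k p.2, X ^ p.1 * tpProd X H k t) +
          ∑ j ∈ Finset.range p.1, ∑ t ∈ Finset.Nat.antidiagonalTuple k p.2,
            (X + H) ^ j * H * X ^ (p.1 - 1 - j) * tpProd X H k t := by
    intro p _
    have e1 : ∀ t ∈ Finset.Nat.antidiagonalTuple k p.2,
        (X + H) ^ p.1 * tpProd X H k t =
          X ^ p.1 * tpProd X H k t + ∑ j ∈ Finset.range p.1,
            (X + H) ^ j * H * X ^ (p.1 - 1 - j) * tpProd X H k t := by
      intro t _
      rw [add_pow_eq_pow_add_sum X H p.1, add_mul, Finset.sum_mul]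
    rw [Finset.sum_congr rfl e1, Finset.sum_add_distrib, Finset.sum_comm]
  rw [Finset.sum_congr rfl lhs_eq, Finset.sum_add_distrib]
  congr 1
  rw [triangle_sum m hm1
    (fun j c q => ∑ t ∈ Finset.Nat.antidiagonalTuple k q,
      (X + H) ^ j * H * X ^ c * tpProd X H k t)]
  refine Finset.sum_congr rfl fun q _ => ?_
  rw [antidiagonalTuple_cons_sum
    (f := fun b => (X + H) ^ q.1 * tpProd X H (k + 1) b)]
  refine Finset.sum_congr rfl fun r _ => ?_
  refine Finset.sum_congr rfl fun t _ => ?_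
  rw [tpProd_succ]
  simp only [Fin.cons_zero, Fin.tail_cons]
  rw [mul_assoc, mul_assoc, mul_assoc]

private lemma pow_taylor_main {R : Type*} [Ring R] (X H : R) (n : ℕ) :
    ∀ k, k ≤ n →
      (X + H) ^ n =
        (∑ ℓ ∈ Finset.range k, ∑ a ∈ Finset.Nat.antidiagonalTuple (ℓ + 1) (n - ℓ),
            X ^ a 0 * tpProd X H ℓ (Fin.tail a)) +
          ∑ a ∈ Finset.Nat.antidiagonalTuple (k + 1) (n - k),
            (X + H) ^ a 0 * tpProd X H k (Fin.tail a) := by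
  intro k
  induction k with
  | zero =>
      intro _
      simp only [Finset.range_zero, Finset.sum_empty, zero_add, Nat.sub_zero,
        tpProd_zero, mul_one]
      show (X + H) ^ n = ∑ x ∈ Finset.Nat.antidiagonalTuple 1 n, (X + H) ^ x 0
      rw [Finset.Nat.antidiagonalTuple_one, Finset.sum_singleton, Matrix.cons_val_zero]
  | succ k ih =>
      intro hk1
      have hk : k < n := by omega
      rw [ih (le_of_lt hk), remainder_step X H n k hk, Finset.sum_range_succ]
      exact (add_assoc _ _ _).symm

/-- **Taylor remainder identity for the monomial `x ↦ x^n` in a noncommutative ring.**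

For elements `X, H` of a (not necessarily commutative) ring and `1 ≤ k ≤ n`,
`(X + H)^n − ∑_{ℓ<k} ∑_{a_0+⋯+a_ℓ = n−ℓ} X^{a_0} H X^{a_1} H ⋯ H X^{a_ℓ}
  = ∑_{a_0+⋯+a_k = n−k} (X + H)^{a_0} H X^{a_1} H ⋯ H X^{a_k}`,
where the inner sums run over tuples of nonnegative integers with the indicated sums;
the subtracted `ℓ`-th inner sum is the `ℓ`-th Taylor term
`(1/ℓ!) dℓ(X + tH)^n/dtℓ |_{t=0}`. -/
theorem pow_taylor_remainder {R : Type*} [Ring R] (X H : R)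
    (n k : ℕ) (hn : 1 ≤ n) (hk : 1 ≤ k) (hkn : k ≤ n) :
    (X + H) ^ n -
        ∑ ℓ ∈ Finset.range k,
          ∑ a ∈ Finset.Nat.antidiagonalTuple (ℓ + 1) (n - ℓ),
            (List.ofFn fun i : Fin (ℓ + 1) =>
              (if (i : ℕ) = 0 then 1 else H) * X ^ a i).prod =
      ∑ a ∈ Finset.Nat.antidiagonalTuple (k + 1) (n - k),
        (X + H) ^ a 0 * (List.ofFn fun i : Fin k => H * X ^ a i.succ).prod := by
  have hT : (∑ ℓ ∈ Finset.range k,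
      ∑ a ∈ Finset.Nat.antidiagonalTuple (ℓ + 1) (n - ℓ),
        (List.ofFn fun i : Fin (ℓ + 1) =>
          (if (i : ℕ) = 0 then 1 else H) * X ^ a i).prod)
      = ∑ ℓ ∈ Finset.range k, ∑ a ∈ Finset.Nat.antidiagonalTuple (ℓ + 1) (n - ℓ),
          X ^ a 0 * tpProd X H ℓ (Fin.tail a) :=
    Finset.sum_congr rfl fun ℓ _ => Finset.sum_congr rfl fun a _ => tpProd_ite X H ℓ a
  have hR : (∑ a ∈ Finset.Nat.antidiagonalTuple (k + 1) (n - k),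
      (X + H) ^ a 0 * (List.ofFn fun i : Fin k => H * X ^ a i.succ).prod)
      = ∑ a ∈ Finset.Nat.antidiagonalTuple (k + 1) (n - k),
          (X + H) ^ a 0 * tpProd X H k (Fin.tail a) := rfl
  rw [hT, hR, pow_taylor_main X H n k hkn, add_sub_cancel_left]
end
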